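/- Let F, F_1, F_2, … ∈ B_c(T) and suppose ‖f_j − f‖_T → 0 as j → ∞, i.e. sup{ |(F_j(β) − F(β)) − (F_j(α) − F(α))| : α ≤ β ≤ α + 2π } → 0. Then for each fixed n ∈ ℤ, the Fourier coefficients converge: f̂_j(n) → f̂(n) as j → ∞, where f̂_j(n) = (−1)^n F_j(π) + i n ∫_{−π}^{π} F_j(t) e^{−int} dt and f̂(n) = (−1)^n F(π) + i n ∫_{−π}^{π} F(t) e^{−int} dt. -/

import Mathlib

open MeasureTheory Real Filter

private lemma shift_lemma (G : ℝ → ℂ) (hper : ∀ x : ℝ, G (x + 2 * π) = G x + G π) :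
    ∀ (k : ℤ) (x : ℝ), G (x + 2 * π * k) = G x + k * G π := by
  have hneg : ∀ x : ℝ, G (x - 2 * π) = G x - G π := by
    intro x
    have h := hper (x - 2 * π)
    rw [sub_add_cancel] at h
    linear_combination -h
  intro k
  induction k using Int.induction_on with
  | zero => intro x; simp
  | succ n ih =>
      intro x
      have h1 : x + 2 * π * ((n : ℤ) + 1 : ℤ) = (x + 2 * π * (n : ℤ)) + 2 * π := by
        push_cast; ring
      rw [h1, hper, ih]
      push_cast; ring
  | pred n ih =>
      intro x
      have h1 : x + 2 * π * (-(n : ℤ) - 1 : ℤ) = (x + 2 * π * (-(n : ℤ) : ℤ)) - 2 * π := by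
        push_cast; ring
      rw [h1, hneg, ih]
      push_cast; ring

/-- If `F, F_j ∈ B_c(𝕋)` and `‖f_j − f‖_𝕋 → 0`, then for each fixed
`n ∈ ℤ` the Fourier coefficients converge: `f̂_j(n) → f̂(n)`. -/
theorem fourier_coeff_tendsto_of_alexiewicz_tendsto (F : ℝ → ℂ) (Fj : ℕ → ℝ → ℂ)
    (hFcont : Continuous F) (hF0 : F (-π) = 0)
    (hFper : ∀ x : ℝ, F (x + 2 * π) = F x + F π)
    (hFjcont : ∀ j, Continuous (Fj j)) (hFj0 : ∀ j, Fj j (-π) = 0)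
    (hFjper : ∀ j, ∀ x : ℝ, Fj j (x + 2 * π) = Fj j x + Fj j π)
    (hconv : Tendsto (fun j : ℕ =>
        sSup {r : ℝ | ∃ α β : ℝ, α ≤ β ∧ β ≤ α + 2 * π ∧
          r = ‖(Fj j β - F β) - (Fj j α - F α)‖}) atTop (nhds 0)) :
    ∀ n : ℤ, Tendsto (fun j : ℕ =>
        (-1 : ℂ) ^ n * Fj j π + Complex.I * (n : ℂ) *
          ∫ t in (-π)..π, Fj j t * Complex.exp (-Complex.I * (n : ℂ) * (t : ℂ)))
      atTop
      (nhds ((-1 : ℂ) ^ n * F π + Complex.I * (n : ℂ) *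
        ∫ t in (-π)..π, F t * Complex.exp (-Complex.I * (n : ℂ) * (t : ℂ)))) := by
  intro n
  set G : ℕ → ℝ → ℂ := fun j t => Fj j t - F t with hG
  set S : ℕ → ℝ := fun j =>
    sSup {r : ℝ | ∃ α β : ℝ, α ≤ β ∧ β ≤ α + 2 * π ∧
      r = ‖(Fj j β - F β) - (Fj j α - F α)‖} with hS
  have hGcont : ∀ j, Continuous (G j) := fun j => (hFjcont j).sub hFcont
  have hGper : ∀ j, ∀ x : ℝ, G j (x + 2 * π) = G j x + G j π := by
    intro j x; simp only [hG, hFjper j x, hFper x]; ring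
  have hG0 : ∀ j, G j (-π) = 0 := by
    intro j; simp only [hG, hFj0 j, hF0, sub_zero]
  have hpi : 0 < π := Real.pi_pos
  -- boundedness of the sets
  have hbdd : ∀ j, BddAbove {r : ℝ | ∃ α β : ℝ, α ≤ β ∧ β ≤ α + 2 * π ∧
      r = ‖(Fj j β - F β) - (Fj j α - F α)‖} := by
    intro j
    obtain ⟨M, hM⟩ : ∃ M : ℝ, ∀ y ∈ Set.Icc (-π) (3 * π), ‖G j y‖ ≤ M := by
      obtain ⟨M, hM⟩ := (isCompact_Icc (a := -π) (b := 3 * π)).exists_bound_of_continuousOn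
        ((hGcont j).continuousOn)
      exact ⟨M, hM⟩
    refine ⟨2 * M, ?_⟩
    rintro r ⟨α, β, hab, hba, rfl⟩
    set k : ℤ := ⌊(α + π) / (2 * π)⌋ with hk
    have h2pi : (0 : ℝ) < 2 * π := by linarith
    have hk1 : (k : ℝ) ≤ (α + π) / (2 * π) := Int.floor_le _
    have hk2 : (α + π) / (2 * π) < k + 1 := Int.lt_floor_add_one _
    have hk1' : (k : ℝ) * (2 * π) ≤ α + π := (le_div_iff₀ h2pi).mp hk1
    have hk2' : α + π < ((k : ℝ) + 1) * (2 * π) := (div_lt_iff₀ h2pi).mp hk2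
    have hα1 : -π ≤ α - 2 * π * k := by nlinarith
    have hα2 : α - 2 * π * k < π := by nlinarith
    have hshift := shift_lemma (G j) (hGper j)
    have hGα : G j α = G j (α - 2 * π * k) + k * G j π := by
      have := hshift k (α - 2 * π * k)
      rwa [sub_add_cancel] at this
    have hGβ : G j β = G j (β - 2 * π * k) + k * G j π := by
      have := hshift k (β - 2 * π * k)
      rwa [sub_add_cancel] at this
    have heq : (Fj j β - F β) - (Fj j α - F α) = G j (β - 2 * π * k) - G j (α - 2 * π * k) := by
      have : (Fj j β - F β) - (Fj j α - F α) = G j β - G j α := by simp [hG]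
      rw [this, hGα, hGβ]; ring
    rw [heq]
    have hmemα : α - 2 * π * k ∈ Set.Icc (-π) (3 * π) := ⟨hα1, by linarith⟩
    have hmemβ : β - 2 * π * k ∈ Set.Icc (-π) (3 * π) := ⟨by linarith, by linarith⟩
    calc ‖G j (β - 2 * π * k) - G j (α - 2 * π * k)‖
        ≤ ‖G j (β - 2 * π * k)‖ + ‖G j (α - 2 * π * k)‖ :=
          norm_sub_le _ _
      _ ≤ M + M := add_le_add (hM _ hmemβ) (hM _ hmemα)
      _ = 2 * M := by ring
  -- pointwise bound on [-π, π]
  have hpt : ∀ j, ∀ t ∈ Set.Icc (-π) π, ‖G j t‖ ≤ S j := by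
    intro j t ht
    have hmem : ‖G j t‖ ∈ {r : ℝ | ∃ α β : ℝ, α ≤ β ∧ β ≤ α + 2 * π ∧
        r = ‖(Fj j β - F β) - (Fj j α - F α)‖} := by
      refine ⟨-π, t, ht.1, by linarith [ht.2], ?_⟩
      simp [hG, hFj0 j, hF0]
    exact le_csSup (hbdd j) hmem
  have hpipt : ∀ j, ‖G j π‖ ≤ S j := fun j =>
    hpt j π ⟨by linarith, le_refl _⟩
  -- convergence of Fj j π
  have h1 : Tendsto (fun j => Fj j π) atTop (nhds (F π)) := by
    rw [tendsto_iff_norm_sub_tendsto_zero]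
    refine squeeze_zero (fun j => norm_nonneg _) (fun j => ?_) hconv
    exact hpipt j
  -- convergence of the integrals
  have hint : ∀ (H : ℝ → ℂ), Continuous H → IntervalIntegrable
      (fun t => H t * Complex.exp (-Complex.I * (n : ℂ) * (t : ℂ))) volume (-π) π := by
    intro H hH
    exact (hH.mul (Continuous.cexp (by continuity))).intervalIntegrable _ _
  have h2 : Tendsto (fun j => ∫ t in (-π)..π, Fj j t *
      Complex.exp (-Complex.I * (n : ℂ) * (t : ℂ))) atTop
      (nhds (∫ t in (-π)..π, F t * Complex.exp (-Complex.I * (n : ℂ) * (t : ℂ)))) := by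
    rw [tendsto_iff_norm_sub_tendsto_zero]
    have key : ∀ j, ‖(∫ t in (-π)..π, Fj j t * Complex.exp (-Complex.I * (n : ℂ) * (t : ℂ))) -
        ∫ t in (-π)..π, F t * Complex.exp (-Complex.I * (n : ℂ) * (t : ℂ))‖ ≤
        S j * (2 * π) := by
      intro j
      rw [← intervalIntegral.integral_sub (hint _ (hFjcont j)) (hint _ hFcont)]
      have hb : ∀ t ∈ Set.uIoc (-π) π,
          ‖Fj j t * Complex.exp (-Complex.I * (n : ℂ) * (t : ℂ)) -
            F t * Complex.exp (-Complex.I * (n : ℂ) * (t : ℂ))‖ ≤ S j := by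
        intro t ht
        rw [Set.uIoc_of_le (by linarith : -π ≤ π)] at ht
        have : Fj j t * Complex.exp (-Complex.I * (n : ℂ) * (t : ℂ)) -
            F t * Complex.exp (-Complex.I * (n : ℂ) * (t : ℂ)) =
            G j t * Complex.exp (-Complex.I * (n : ℂ) * (t : ℂ)) := by
          simp [hG]; ring
        rw [this]
        have habs : ‖Complex.exp (-Complex.I * (n : ℂ) * (t : ℂ))‖ = 1 := by
          rw [Complex.norm_exp]
          have : (-Complex.I * (n : ℂ) * (t : ℂ)).re = 0 := by simp
          rw [this, Real.exp_zero]
        rw [norm_mul]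
        calc ‖G j t‖ * ‖Complex.exp (-Complex.I * (n : ℂ) * (t : ℂ))‖
            = ‖G j t‖ * 1 := by rw [habs]
          _ ≤ S j := by rw [mul_one]; exact hpt j t ⟨le_of_lt ht.1, ht.2⟩
      have := intervalIntegral.norm_integral_le_of_norm_le_const hb
      calc ‖∫ t in (-π)..π, (Fj j t * Complex.exp (-Complex.I * (n : ℂ) * (t : ℂ)) -
              F t * Complex.exp (-Complex.I * (n : ℂ) * (t : ℂ)))‖
          ≤ S j * |π - (-π)| := this
        _ = S j * (2 * π) := by rw [abs_of_pos (by linarith)]; ring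
    have hlim : Tendsto (fun j => S j * (2 * π)) atTop (nhds 0) := by
      have := hconv.mul_const (2 * π)
      simpa using this
    exact squeeze_zero (fun j => norm_nonneg _) key hlim
  exact ((h1.const_mul ((-1 : ℂ) ^ n)).add (h2.const_mul (Complex.I * (n : ℂ))))
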